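/- Let (R, m_R) be a 2-dimensional Noetherian local domain, let g ∈ m_R generate a prime ideal, and let h ∈ m_R be such that the image h̄ of h in A = R/(g) is nonzero and equals u^d for some u in the fraction field of A and some positive integer d, where the integral closure B of A in its fraction field is a finitely generated A-module. Then the length of R/(g,h) as an R-module is at least d. -/

import Mathlib

set_option synthInstance.maxHeartbeats 400000
set_option maxHeartbeats 1000000


section AuxLemmas
open Order


lemma my_exists_two_series {γ₁ γ₂ : Type*} [PartialOrder γ₁] [PartialOrder γ₂]
    (p : LTSeries (γ₁ × γ₂)) :
    ∃ (q₁ : LTSeries γ₁) (q₂ : LTSeries γ₂),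
      p.length ≤ q₁.length + q₂.length ∧ q₁.last ≤ p.last.1 ∧ q₂.last ≤ p.last.2 := by
  suffices H : ∀ (N : ℕ) (p : LTSeries (γ₁ × γ₂)), p.length = N →
      ∃ (q₁ : LTSeries γ₁) (q₂ : LTSeries γ₂),
        p.length ≤ q₁.length + q₂.length ∧ q₁.last ≤ p.last.1 ∧ q₂.last ≤ p.last.2 from
    H p.length p rfl
  intro N
  induction N with
  | zero =>
    intro p hp
    exact ⟨RelSeries.singleton _ p.last.1, RelSeries.singleton _ p.last.2,
      by simp [hp], by simp [RelSeries.last_singleton], by simp [RelSeries.last_singleton]⟩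
  | succ N ih =>
    intro p hp
    obtain ⟨q₁, q₂, hl, h1, h2⟩ := ih p.eraseLast (by simp [RelSeries.eraseLast, hp])
    have hlast : p.eraseLast.last < p.last := p.eraseLast_last_rel_last (by omega)
    have hle := hlast.le
    by_cases hc : p.eraseLast.last.1 = p.last.1
    · have h2' : p.eraseLast.last.2 < p.last.2 :=
        lt_of_le_of_ne hle.2 (fun e => hlast.ne (Prod.ext hc e))
      refine ⟨q₁, q₂.snoc p.last.2 (lt_of_le_of_lt h2 h2'), ?_, ?_, ?_⟩
      · have : (q₂.snoc p.last.2 (lt_of_le_of_lt h2 h2')).length = q₂.length + 1 := by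
          simp [RelSeries.snoc, RelSeries.append]
        rw [this]
        simp only [RelSeries.eraseLast] at hl
        omega
      · exact h1.trans hle.1
      · simp
    · have h1' : p.eraseLast.last.1 < p.last.1 := lt_of_le_of_ne hle.1 hc
      refine ⟨q₁.snoc p.last.1 (lt_of_le_of_lt h1 h1'), q₂, ?_, ?_, ?_⟩
      · have : (q₁.snoc p.last.1 (lt_of_le_of_lt h1 h1')).length = q₁.length + 1 := by
          simp [RelSeries.snoc, RelSeries.append]
        rw [this]
        simp only [RelSeries.eraseLast] at hl
        omega
      · simp
      · exact h2.trans hle.2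

lemma my_krullDim_prod_le {γ₁ γ₂ : Type*} [PartialOrder γ₁] [PartialOrder γ₂] :
    krullDim (γ₁ × γ₂) ≤ krullDim γ₁ + krullDim γ₂ := by
  rw [Order.krullDim]
  apply iSup_le
  intro p
  obtain ⟨q₁, q₂, hl, -, -⟩ := my_exists_two_series p
  calc (p.length : WithBot ℕ∞) ≤ ((q₁.length + q₂.length : ℕ) : WithBot ℕ∞) := by
        exact_mod_cast (by exact_mod_cast hl : ((p.length :ℕ∞)) ≤ ((q₁.length + q₂.length : ℕ) : ℕ∞))
    _ = (q₁.length : WithBot ℕ∞) + (q₂.length : WithBot ℕ∞) := by push_cast; rfl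
    _ ≤ krullDim γ₁ + krullDim γ₂ :=
        add_le_add (LTSeries.length_le_krullDim q₁) (LTSeries.length_le_krullDim q₂)

lemma my_krullDim_submodule_le {S M : Type*} [Ring S] [AddCommGroup M] [Module S M]
    (N : Submodule S M) :
    krullDim (Submodule S M) ≤ krullDim (Submodule S (M ⧸ N)) + krullDim (Submodule S N) := by
  refine le_trans (krullDim_le_of_strictMono
    (fun P => (Submodule.map N.mkQ P, Submodule.comap N.subtype P)) ?_) my_krullDim_prod_le
  intro P Q hPQ
  refine lt_of_le_of_ne
    ⟨Submodule.map_mono hPQ.le, Submodule.comap_mono hPQ.le⟩ (fun heq => hPQ.ne ?_)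
  have h1 : Submodule.map N.mkQ P = Submodule.map N.mkQ Q := congrArg Prod.fst heq
  have h2 : Submodule.comap N.subtype P = Submodule.comap N.subtype Q := congrArg Prod.snd heq
  apply eq_of_le_of_inf_le_of_sup_le hPQ.le
  · have := congrArg (Submodule.map N.subtype) h2
    rw [Submodule.map_comap_subtype, Submodule.map_comap_subtype] at this
    rw [inf_comm, ← this, inf_comm]
  · have := congrArg (Submodule.comap N.mkQ) h1
    rw [Submodule.comap_map_mkQ, Submodule.comap_map_mkQ] at this
    rw [sup_comm, ← this, sup_comm]

lemma my_krullDim_submodule_congr {S M M' : Type*} [Ring S] [AddCommGroup M] [Module S M]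
    [AddCommGroup M'] [Module S M'] (e : M ≃ₗ[S] M') :
    krullDim (Submodule S M) = krullDim (Submodule S M') :=
  krullDim_eq_of_orderIso (Submodule.orderIsoMapComap e)

section Main


variable {A : Type*} [CommRing A] [IsDomain A] [IsLocalRing A] [IsNoetherianRing A]
variable {K : Type*} [Field K] [Algebra A K] [IsFractionRing A K]

lemma myMain
    (hBfg : Module.Finite A (integralClosure A K))
    (a : A) (ha0 : a ≠ 0) (ham : a ∈ IsLocalRing.maximalIdeal A)
    (d : ℕ) (hd : 0 < d) (u : K)
    (hu : algebraMap A K a = u ^ d) :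
    (d : WithBot ℕ∞) ≤ Order.krullDim (Submodule A (A ⧸ Ideal.span {a})) := by
  classical
  set B := integralClosure A K with hB
  set BM : Submodule A K := Subalgebra.toSubmodule B with hBM
  have halg : Function.Injective (algebraMap A K) := IsFractionRing.injective A K
  have hu0 : u ≠ 0 := by
    intro e
    exact ha0 (halg (by rw [hu, e, zero_pow hd.ne', map_zero]))
  have huB : u ∈ B := IsIntegral.of_pow hd (by rw [← hu]; exact isIntegral_algebraMap)
  -- the submodules u^i • B
  set W : ℕ → Submodule A K := fun i =>
    { carrier := {x | ∃ c ∈ BM, x = u ^ i * c}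
      add_mem' := by
        rintro x y ⟨c, hc, rfl⟩ ⟨c', hc', rfl⟩
        exact ⟨c + c', add_mem hc hc', by ring⟩
      zero_mem' := ⟨0, zero_mem _, (mul_zero _).symm⟩
      smul_mem' := by
        rintro r x ⟨c, hc, rfl⟩
        exact ⟨r • c, BM.smul_mem r hc, by rw [Algebra.smul_def, Algebra.smul_def]; ring⟩ } with hW
  have hWmem : ∀ (i : ℕ) (x : K), x ∈ W i ↔ ∃ c ∈ BM, x = u ^ i * c := fun i x => Iff.rfl
  have hWsucc : ∀ i, W (i + 1) ≤ W i := by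
    rintro i x ⟨c, hc, rfl⟩
    refine ⟨u * c, ?_, by rw [pow_succ]; ring⟩
    exact (Subalgebra.mem_toSubmodule B).mpr (B.mul_mem huB ((Subalgebra.mem_toSubmodule B).mp hc))
  -- the intersection is zero, by Nakayama
  set N : Submodule A K := ⨅ i, W i with hN
  have hNle : N ≤ BM := by
    refine le_trans (iInf_le W 0) ?_
    rintro x ⟨c, hc, rfl⟩
    simpa using hc
  have hBMfg : BM.FG := Module.Finite.iff_fg.mp hBfg
  haveI : IsNoetherian A BM := isNoetherian_of_fg_of_noetherian BM hBMfg
  have hNfg : N.FG := by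
    have hmc : Submodule.map BM.subtype (Submodule.comap BM.subtype N) = N := by
      rw [Submodule.map_comap_subtype]
      exact inf_eq_right.mpr hNle
    rw [← hmc]
    exact (IsNoetherian.noetherian _).map _
  have hNbot : N = ⊥ := by
    refine Submodule.eq_bot_of_le_smul_of_le_jacobson_bot (Ideal.span {a}) N hNfg ?_ ?_
    · intro x hx
      have hx' := Submodule.mem_iInf W |>.mp hx
      obtain ⟨c, hc, hxc⟩ := hx' d
      have hcN : c ∈ N := by
        refine Submodule.mem_iInf W |>.mpr fun i => ?_
        obtain ⟨c', hc', hxc'⟩ := hx' (d + i)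
        refine ⟨c', hc', ?_⟩
        have : u ^ d * c = u ^ d * (u ^ i * c') := by
          rw [← hxc, hxc', pow_add]; ring
        exact mul_left_cancel₀ (pow_ne_zero d hu0) this
      have hxa : x = a • c := by rw [Algebra.smul_def, hu, ← hxc]
      rw [hxa]
      exact Submodule.smul_mem_smul (Ideal.mem_span_singleton_self a) hcN
    · rw [IsLocalRing.jacobson_eq_maximalIdeal ⊥ bot_ne_top]
      exact Ideal.span_le.mpr (Set.singleton_subset_iff.mpr ham)
  -- conductor element t
  obtain ⟨s, hs⟩ := hBMfg
  obtain ⟨tden, htden⟩ := IsLocalization.exist_integer_multiples_of_finset (nonZeroDivisors A) s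
  set t : A := (tden : A) with ht
  have ht0 : t ≠ 0 := nonZeroDivisors.ne_zero tden.2
  have hcond : ∀ x ∈ BM, ∃ r : A, algebraMap A K r = algebraMap A K t * x := by
    intro x hx
    rw [← hs] at hx
    induction hx using Submodule.span_induction with
    | mem x hxs =>
      obtain ⟨r, hr⟩ := htden x hxs
      exact ⟨r, by rw [hr, Algebra.smul_def]⟩
    | zero => exact ⟨0, by simp⟩
    | add x y hx hy ihx ihy =>
      obtain ⟨r1, hr1⟩ := ihx
      obtain ⟨r2, hr2⟩ := ihy
      exact ⟨r1 + r2, by rw [map_add, hr1, hr2]; ring⟩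
    | smul r x hx ihx =>
      obtain ⟨r1, hr1⟩ := ihx
      exact ⟨r * r1, by rw [map_mul, hr1, Algebra.smul_def]; ring⟩
  have htBM : algebraMap A K t ∈ BM := (Subalgebra.mem_toSubmodule B).mpr isIntegral_algebraMap
  -- find k with t ∈ u^k B \ u^(k+1) B
  have hex : ∃ i, algebraMap A K t ∉ W i := by
    by_contra hall
    push_neg at hall
    have : algebraMap A K t ∈ N := Submodule.mem_iInf W |>.mpr hall
    rw [hNbot, Submodule.mem_bot] at this
    exact ht0 (halg (by simpa using this))
  set k₀ := Nat.find hex with hk₀def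
  have hk₀ : algebraMap A K t ∉ W k₀ := Nat.find_spec hex
  have hk₀0 : k₀ ≠ 0 := by
    intro e
    exact hk₀ (by rw [e]; exact ⟨algebraMap A K t, htBM, by rw [pow_zero, one_mul]⟩)
  set k := k₀ - 1 with hkdef
  have hk1 : algebraMap A K t ∈ W k := by
    by_contra hcon
    exact absurd hcon (not_not.mpr (by_contra fun h => absurd (Nat.find_min hex (by omega) h) id))
  have hk2 : algebraMap A K t ∉ W (k + 1) := by
    have : k + 1 = k₀ := by omega
    rw [this]; exact hk₀

  -- the chain of ideals
  have hchain : ∀ n : ℕ, k ≤ n * d →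
      ((n * d - k : ℕ) : WithBot ℕ∞) ≤
        Order.krullDim (Submodule A (A ⧸ Ideal.span {a ^ n})) := by
    intro n hkn
    set I : ℕ → Ideal A := fun i =>
      Submodule.comap (Algebra.linearMap A K) (W (k + i)) ⊔ Ideal.span {a ^ n} with hI
    have hr : ∀ i : ℕ, ∃ r : A, algebraMap A K r = algebraMap A K t * u ^ i := fun i =>
      hcond (u ^ i) ((Subalgebra.mem_toSubmodule B).mpr (B.pow_mem huB i))
    choose r hrspec using hr
    obtain ⟨c0, hc0, htk⟩ := hk1
    have hmem1 : ∀ i, r i ∈ I i := by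
      intro i
      refine Submodule.mem_sup_left ?_
      refine ⟨c0, hc0, ?_⟩
      rw [Algebra.linearMap_apply, hrspec i, htk, pow_add]
      ring
    have hnotmem : ∀ i, k + i + 1 ≤ n * d → r i ∉ I (i + 1) := by
      intro i hle hmem
      rw [Submodule.mem_sup] at hmem
      obtain ⟨x, hx, y, hy, hxy⟩ := hmem
      rw [Submodule.mem_comap, Algebra.linearMap_apply] at hx
      obtain ⟨c₁, hc₁, hx1⟩ := hx
      obtain ⟨z, hz⟩ := Ideal.mem_span_singleton'.mp hy
      set e := n * d - (k + i + 1) with hedef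
      have hc₂ : c₁ + u ^ e * algebraMap A K z ∈ BM := by
        refine add_mem hc₁ ((Subalgebra.mem_toSubmodule B).mpr ?_)
        exact B.mul_mem (B.pow_mem huB e) isIntegral_algebraMap
      apply hk2
      refine ⟨c₁ + u ^ e * algebraMap A K z, hc₂, ?_⟩
      have key : algebraMap A K t * u ^ i = (u ^ (k + 1) * (c₁ + u ^ e * algebraMap A K z)) * u ^ i := by
        have h1 : algebraMap A K t * u ^ i = algebraMap A K (r i) := (hrspec i).symm
        have h2 : algebraMap A K (r i) = algebraMap A K x + algebraMap A K z * u ^ (n * d) := by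
          rw [← hxy, map_add, ← hz, map_mul, map_pow, hu, ← pow_mul, mul_comm d n]
        have h3 : algebraMap A K x = u ^ (k + i + 1) * c₁ := hx1
        have h4 : n * d = (k + 1) + e + i := by omega
        rw [h1, h2, h3, h4, pow_add, pow_add, pow_add, pow_add]
        ring
      have := mul_right_cancel₀ (pow_ne_zero i hu0) key
      rw [this, mul_add]
    have hIdec : ∀ i, I (i + 1) ≤ I i := by
      intro i
      exact sup_le_sup_right (Submodule.comap_mono (hWsucc (k + i))) _
    set m := n * d - k with hm
    have hkm : k + m = n * d := by omega
    set f : Fin (m + 1) → Submodule A (A ⧸ Ideal.span {a ^ n}) :=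
      fun j => Submodule.map (Ideal.span {a ^ n} : Ideal A).mkQ (I (m - (j : ℕ))) with hf
    have hstrict : StrictMono f := by
      rw [Fin.strictMono_iff_lt_succ]
      intro j
      have hjlt : (j : ℕ) < m := j.isLt
      set i := m - ((j : ℕ) + 1) with hi
      have h1 : m - (j : ℕ) = i + 1 := by omega
      have hcs : (m - ((j.castSucc : Fin (m+1)) : ℕ)) = i + 1 := by
        simp only [Fin.coe_castSucc]; omega
      have hsc : (m - ((j.succ : Fin (m+1)) : ℕ)) = i := by
        simp only [Fin.val_succ]; omega
      simp only [hf, hcs, hsc]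
      rw [SetLike.lt_iff_le_and_exists]
      constructor
      · exact Submodule.map_mono (hIdec i)
      · refine ⟨Submodule.Quotient.mk (r i), Submodule.mem_map_of_mem (hmem1 i), ?_⟩
        rintro ⟨y, hy, hyq⟩
        have hsub : y - r i ∈ (Ideal.span {a ^ n} : Ideal A) :=
          (Submodule.Quotient.eq _).mp hyq
        have : r i ∈ I (i + 1) := by
          have : r i = y - (y - r i) := by ring
          rw [this]
          exact sub_mem hy (le_sup_right (α := Ideal A) hsub)
        exact hnotmem i (by omega) this
    have hple := LTSeries.length_le_krullDim (LTSeries.mk m f hstrict)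
    exact hple

  -- subadditivity of length
  have hsubadd : ∀ n : ℕ, Order.krullDim (Submodule A (A ⧸ Ideal.span {a ^ (n+1)})) ≤
      Order.krullDim (Submodule A (A ⧸ Ideal.span {a ^ n})) +
      Order.krullDim (Submodule A (A ⧸ Ideal.span {a ^ 1})) := by
    intro n
    set S : Ideal A := Ideal.span {a ^ (n+1)} with hSdef
    set T : Ideal A := Ideal.span {a ^ n} with hTdef
    have hST : S ≤ T := by
      rw [hSdef, Ideal.span_le, Set.singleton_subset_iff]
      exact Ideal.mem_span_singleton'.mpr ⟨a, by rw [pow_succ]; ring⟩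
    set N' : Submodule A (A ⧸ S) := Submodule.map S.mkQ T with hN'def
    have e1 : ((A ⧸ S) ⧸ N') ≃ₗ[A] A ⧸ T := Submodule.quotientQuotientEquivQuotient S T hST
    set φ : A →ₗ[A] A ⧸ S := S.mkQ ∘ₗ LinearMap.toSpanSingleton A A (a ^ n) with hφdef
    have hrange : LinearMap.range φ = N' := by
      rw [hφdef, LinearMap.range_comp, ← LinearMap.span_singleton_eq_range]
    have hker : LinearMap.ker φ = Ideal.span {a ^ 1} := by
      ext r
      rw [pow_one]
      simp only [hφdef, LinearMap.mem_ker, LinearMap.comp_apply,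
        LinearMap.toSpanSingleton_apply, Submodule.mkQ_apply, Submodule.Quotient.mk_eq_zero,
        smul_eq_mul]
      constructor
      · intro hmem
        obtain ⟨z, hz⟩ := Ideal.mem_span_singleton'.mp hmem
        refine Ideal.mem_span_singleton'.mpr ⟨z, ?_⟩
        have hzz : (z * a) * a ^ n = r * a ^ n := by rw [← hz, pow_succ]; ring
        exact mul_right_cancel₀ (pow_ne_zero n ha0) hzz
      · intro hmem
        obtain ⟨z, hz⟩ := Ideal.mem_span_singleton'.mp hmem
        exact Ideal.mem_span_singleton'.mpr ⟨z, by rw [← hz, pow_succ]; ring⟩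
    have e2 := φ.quotKerEquivRange
    rw [hker, hrange] at e2
    calc Order.krullDim (Submodule A (A ⧸ S))
        ≤ Order.krullDim (Submodule A ((A ⧸ S) ⧸ N')) + Order.krullDim (Submodule A N') :=
          my_krullDim_submodule_le N'
      _ = Order.krullDim (Submodule A (A ⧸ T)) +
          Order.krullDim (Submodule A (A ⧸ Ideal.span {a ^ 1})) := by
          rw [my_krullDim_submodule_congr e1, ← my_krullDim_submodule_congr e2]
  -- finish
  have hpow1 : Ideal.span {a} = Ideal.span {a ^ 1} := by rw [pow_one]
  rw [hpow1]
  by_cases htop : Order.krullDim (Submodule A (A ⧸ Ideal.span {a ^ 1})) = ⊤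
  · rw [htop]; exact le_top
  · have hnbot : (0 : WithBot ℕ∞) ≤ Order.krullDim (Submodule A (A ⧸ Ideal.span {a ^ 1})) :=
      Order.krullDim_nonneg
    obtain ⟨x, hx⟩ : ∃ x : ℕ∞,
        Order.krullDim (Submodule A (A ⧸ Ideal.span {a ^ 1})) = (x : WithBot ℕ∞) := by
      cases hcase : Order.krullDim (Submodule A (A ⧸ Ideal.span {a ^ 1})) with
      | bot => rw [hcase] at hnbot; exact absurd hnbot (by simp)
      | coe x => exact ⟨x, rfl⟩
    obtain ⟨c₀, hc₀⟩ : ∃ c₀ : ℕ, x = (c₀ : ℕ∞) := by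
      cases hxc : x with
      | top => rw [hx, hxc] at htop; exact absurd rfl htop
      | coe c => exact ⟨c, rfl⟩
    rw [hc₀] at hx
    have hLMcast : Order.krullDim (Submodule A (A ⧸ Ideal.span {a ^ 1})) =
        ((c₀ : ℕ) : WithBot ℕ∞) := by rw [hx]; norm_cast
    have hLMle : ∀ n : ℕ, Order.krullDim (Submodule A (A ⧸ Ideal.span {a ^ (n+1)})) ≤
        (((n+1) * c₀ : ℕ) : WithBot ℕ∞) := by
      intro n
      induction n with
      | zero => rw [hLMcast]; norm_num
      | succ n ih =>
        calc Order.krullDim (Submodule A (A ⧸ Ideal.span {a ^ (n+1+1)}))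
            ≤ Order.krullDim (Submodule A (A ⧸ Ideal.span {a ^ (n+1)})) +
              Order.krullDim (Submodule A (A ⧸ Ideal.span {a ^ 1})) := hsubadd (n+1)
          _ ≤ (((n+1) * c₀ : ℕ) : WithBot ℕ∞) + ((c₀ : ℕ) : WithBot ℕ∞) :=
              add_le_add ih (le_of_eq hLMcast)
          _ = (((n+1+1) * c₀ : ℕ) : WithBot ℕ∞) := by
              rw [← Nat.cast_add]
              congr 1
              ring
    have hkd : k ≤ (k + 1) * d := le_trans (Nat.le_succ k) (Nat.le_mul_of_pos_right (k+1) hd)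
    have h1 := hchain (k + 1) hkd
    have h2 := hLMle k
    have h3 : (((k+1) * d - k : ℕ) : WithBot ℕ∞) ≤ (((k+1) * c₀ : ℕ) : WithBot ℕ∞) :=
      le_trans h1 h2
    have hnat : (k+1) * d - k ≤ (k+1) * c₀ := by exact_mod_cast h3
    have h5 : (k+1) * d ≤ (k+1) * c₀ + k := Nat.sub_le_iff_le_add.mp hnat
    have h6 : (k+1) * d < (k+1) * (c₀ + 1) := by
      have h7 : (k+1) * c₀ + k < (k+1) * c₀ + (k+1) := Nat.add_lt_add_left (Nat.lt_succ_self k) _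
      have h8 : (k+1) * (c₀ + 1) = (k+1) * c₀ + (k+1) := by ring
      rw [h8]
      exact lt_of_le_of_lt h5 h7
    have hdle : d ≤ c₀ := Nat.lt_succ_iff.mp (Nat.lt_of_mul_lt_mul_left h6)
    rw [hLMcast]
    exact_mod_cast hdle

end Main

end AuxLemmas

/-- The length of an `R`-module `M`, i.e. the supremum of lengths of chains of submodules,
as an element of `WithBot ℕ∞`. -/
noncomputable def moduleLength (R M : Type*) [CommRing R] [AddCommGroup M] [Module R M] :
    WithBot ℕ∞ :=
  Order.krullDim (Submodule R M)

open Order in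
theorem stmt_7 (R : Type*) [CommRing R] [IsDomain R] [IsLocalRing R] [IsNoetherianRing R]
    (hdim : ringKrullDim R = 2)
    (g h : R) (hg : g ∈ IsLocalRing.maximalIdeal R) (hh : h ∈ IsLocalRing.maximalIdeal R)
    [hgprime : (Ideal.span {g}).IsPrime]
    (hbar : (Ideal.Quotient.mk (Ideal.span {g})) h ≠ 0)
    (hBfg : Module.Finite (R ⧸ Ideal.span {g})
      (integralClosure (R ⧸ Ideal.span {g}) (FractionRing (R ⧸ Ideal.span {g}))))
    (d : ℕ) (hd : 0 < d)
    (u : FractionRing (R ⧸ Ideal.span {g}))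
    (hu : algebraMap (R ⧸ Ideal.span {g}) (FractionRing (R ⧸ Ideal.span {g}))
      ((Ideal.Quotient.mk (Ideal.span {g})) h) = u ^ d) :
    (d : WithBot ℕ∞) ≤ moduleLength R (R ⧸ Ideal.span {g, h}) := by
  haveI : IsLocalRing (R ⧸ Ideal.span {g}) :=
    IsLocalRing.of_surjective' (Ideal.Quotient.mk (Ideal.span {g})) Ideal.Quotient.mk_surjective
  set A := R ⧸ Ideal.span {g} with hA
  set a : A := Ideal.Quotient.mk (Ideal.span {g}) h with ha
  have ham : a ∈ IsLocalRing.maximalIdeal A := by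
    rw [IsLocalRing.mem_maximalIdeal]
    intro hunit
    obtain ⟨v, hv⟩ := hunit.exists_right_inv
    obtain ⟨r, rfl⟩ := Ideal.Quotient.mk_surjective v
    have : (Ideal.Quotient.mk (Ideal.span {g})) (h * r - 1) = 0 := by
      rw [map_sub, map_mul, map_one, hv, sub_self]
    have hmem : h * r - 1 ∈ Ideal.span {g} := Ideal.Quotient.eq_zero_iff_mem.mp this
    have h1 : (1 : R) ∈ IsLocalRing.maximalIdeal R := by
      have : (1 : R) = h * r - (h * r - 1) := by ring
      rw [this]
      refine sub_mem (Ideal.mul_mem_right r _ hh) ?_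
      exact Ideal.span_le.mpr (Set.singleton_subset_iff.mpr hg) hmem
    exact (IsLocalRing.maximalIdeal.isMaximal R).ne_top (Ideal.eq_top_of_unit_mem _ _ 1 h1 (by simp))
  have hmain := myMain hBfg a hbar ham d hd u hu
  -- transfer to R-submodules of R ⧸ span {g, h}
  have ε₁ : (A ⧸ Ideal.span {a}) ≃ₐ[R]
      A ⧸ Ideal.map (Ideal.Quotient.mkₐ R (Ideal.span {g})) (Ideal.span {h}) :=
    Ideal.quotientEquivAlgOfEq R (by rw [Ideal.map_span, Set.image_singleton]; rfl)
  have ε₂ := DoubleQuot.quotQuotEquivQuotSupₐ R (Ideal.span {g}) (Ideal.span {h})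
  have ε₃ : (R ⧸ (Ideal.span {g} ⊔ Ideal.span {h})) ≃ₐ[R] R ⧸ Ideal.span {g, h} :=
    Ideal.quotientEquivAlgOfEq R (by rw [← Ideal.span_union, Set.singleton_union])
  have e : (A ⧸ Ideal.span {a}) ≃ₗ[R] (R ⧸ Ideal.span {g, h}) :=
    (ε₁.trans (ε₂.trans ε₃)).toLinearEquiv
  have hstep : Order.krullDim (Submodule A (A ⧸ Ideal.span {a})) ≤
      Order.krullDim (Submodule R (A ⧸ Ideal.span {a})) := by
    refine krullDim_le_of_strictMono (Submodule.restrictScalars R) ?_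
    intro P Q hPQ
    refine lt_of_le_of_ne (fun x hx => hPQ.le hx)
      (fun heq => hPQ.ne (Submodule.restrictScalars_injective R _ _ heq))
  calc (d : WithBot ℕ∞) ≤ Order.krullDim (Submodule A (A ⧸ Ideal.span {a})) := hmain
    _ ≤ Order.krullDim (Submodule R (A ⧸ Ideal.span {a})) := hstep
    _ = Order.krullDim (Submodule R (R ⧸ Ideal.span {g, h})) := my_krullDim_submodule_congr e
    _ = moduleLength R (R ⧸ Ideal.span {g, h}) := rfl
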